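/- Let p, q > 1 with 1/p + 1/q = 1, and define h(t,u) = 1/(1-e^{-t}) - e^{-(u+1)pt}/(1-e^{-pt}) - e^{uqt}/(1-e^{-qt}) for t > 0. Then for fixed t > 0, the function u ↦ h(t,u) is concave. -/

import Mathlib

open Real Set

theorem h_concave_in_u (p q : ℝ) (hp : 1 < p) (hq : 1 < q) (hpq : 1 / p + 1 / q = 1)
    (t : ℝ) (ht : 0 < t) :
    ConcaveOn ℝ univ (fun u : ℝ =>
      1 / (1 - exp (-t)) - exp (-((u + 1) * p * t)) / (1 - exp (-(p * t)))
        - exp (u * q * t) / (1 - exp (-(q * t)))) := by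
  have hpt : 0 < p * t := mul_pos (lt_trans one_pos hp) ht
  have hqt : 0 < q * t := mul_pos (lt_trans one_pos hq) ht
  have hA : 0 < 1 - exp (-(p * t)) := by
    have : exp (-(p * t)) < 1 := exp_lt_one_iff.2 (by linarith)
    linarith
  have hB : 0 < 1 - exp (-(q * t)) := by
    have : exp (-(q * t)) < 1 := exp_lt_one_iff.2 (by linarith)
    linarith
  have h1 : ConvexOn ℝ univ (fun u : ℝ => exp (-((u + 1) * p * t))) := by
    have := convexOn_exp.comp_affineMap
      (AffineMap.lineMap (-(p * t)) (-(2 * (p * t))) : ℝ →ᵃ[ℝ] ℝ)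
    convert this using 2 with u
    any_goals rfl
    simp [AffineMap.lineMap_apply]
    ring
  have h2 : ConvexOn ℝ univ (fun u : ℝ => exp (u * q * t)) := by
    have := convexOn_exp.comp_affineMap
      (AffineMap.lineMap (0 : ℝ) (q * t) : ℝ →ᵃ[ℝ] ℝ)
    convert this using 2 with u
    any_goals rfl
    simp [AffineMap.lineMap_apply]
    ring
  have h1' : ConvexOn ℝ univ
      (fun u : ℝ => exp (-((u + 1) * p * t)) / (1 - exp (-(p * t)))) := by
    have := h1.smul (c := (1 - exp (-(p * t)))⁻¹) (by positivity)
    convert this using 2 with u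
    any_goals rfl
    simp [smul_eq_mul, div_eq_inv_mul]
  have h2' : ConvexOn ℝ univ
      (fun u : ℝ => exp (u * q * t) / (1 - exp (-(q * t)))) := by
    have := h2.smul (c := (1 - exp (-(q * t)))⁻¹) (by positivity)
    convert this using 2 with u
    any_goals rfl
    simp [smul_eq_mul, div_eq_inv_mul]
  have hsum := ((h1'.add h2').sub (concaveOn_const (1 / (1 - exp (-t))) convex_univ)).neg
  convert hsum using 2 with u
  any_goals rfl
  simp only [Pi.neg_apply, Pi.add_apply, Pi.sub_apply]
  ring
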